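/- arXiv:2003.01503 — 3 statements merged into one kernel-verified Lean document; each statement's English description precedes it below -/
import Mathlib

section
/- Let N = (S, C, R) be a chemical reaction network and let N_1, ..., N_k be the subnetworks of a decomposition which is independent or incidence independent, and suppose every subnetwork has deficiency zero, δ_i = 0 for all i. Then δ = 0 if and only if the decomposition is bi-independent. -/
open scoped Classical

noncomputable section

/-- A reaction: an ordered pair (reactant complex, product complex) of vectors in ℝ^S. -/
abbrev Rxn (S : Type*) := (S → ℝ) × (S → ℝ)

variable {S : Type*} [Fintype S]

/-- The set of complexes occurring in a reaction set. -/
def complexesOf (R : Finset (Rxn S)) : Finset (S → ℝ) :=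
  R.image Prod.fst ∪ R.image Prod.snd

/-- `(C, R)` is a chemical reaction network on the species set `S`:
complexes have nonnegative integer coordinates, reactions go between complexes,
no reaction is a loop, and every complex occurs in at least one reaction. -/
def IsCRN (C : Finset (S → ℝ)) (R : Finset (Rxn S)) : Prop :=
  C.Nonempty ∧ R.Nonempty ∧
  (∀ y ∈ C, ∀ s, ∃ n : ℕ, y s = (n : ℝ)) ∧
  (∀ r ∈ R, r.1 ∈ C ∧ r.2 ∈ C) ∧
  (∀ r ∈ R, r.1 ≠ r.2) ∧
  (∀ y ∈ C, ∃ r ∈ R, r.1 = y ∨ r.2 = y)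

/-- The stoichiometric subspace `span {y' - y : (y, y') ∈ R}`. -/
def stoichSubspace (R : Finset (Rxn S)) : Submodule ℝ (S → ℝ) :=
  Submodule.span ℝ ((fun r : Rxn S => r.2 - r.1) '' ↑R)

/-- The rank `s = dim S` of the network. -/
def crnRank (R : Finset (Rxn S)) : ℕ := Module.finrank ℝ (stoichSubspace R)

/-- The standard basis vector `ω_y` of the complex space `ℝ^C` (realized inside
the space of real-valued functions on complexes). -/
def omegaC (y : S → ℝ) : (S → ℝ) → ℝ := fun z => if z = y then 1 else 0

/-- The image of the incidence map `I_a`, i.e. the span of the vectors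
`ω_{y'} - ω_y` over reactions `y → y'`. -/
def incImage (R : Finset (Rxn S)) : Submodule ℝ ((S → ℝ) → ℝ) :=
  Submodule.span ℝ ((fun r : Rxn S => omegaC r.2 - omegaC r.1) '' ↑R)

/-- The underlying undirected graph of `(C, R)`, on the complexes occurring in `R`. -/
def linkGraph (R : Finset (Rxn S)) : SimpleGraph {y : S → ℝ // y ∈ complexesOf R} where
  Adj a b := a ≠ b ∧ ((a.1, b.1) ∈ R ∨ (b.1, a.1) ∈ R)
  symm := ⟨fun a b h => ⟨h.1.symm, h.2.symm⟩⟩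
  loopless := ⟨fun a h => h.1 rfl⟩

/-- `n`, the number of complexes. -/
def numComplexes (R : Finset (Rxn S)) : ℕ := (complexesOf R).card

/-- `l`, the number of linkage classes (connected components of the
underlying undirected graph). -/
def numLinkageClasses (R : Finset (Rxn S)) : ℕ :=
  Nat.card (linkGraph R).ConnectedComponent

/-- The deficiency `δ = n - l - s` (as an integer). -/
def deficiency (R : Finset (Rxn S)) : ℤ :=
  (numComplexes R : ℤ) - (numLinkageClasses R : ℤ) - (crnRank R : ℤ)

/-- A covering of the reaction set `R`: a family of subsets of `R` whose union is `R`. -/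
def IsCovering {ι : Type*} (R : Finset (Rxn S)) (f : ι → Finset (Rxn S)) : Prop :=
  (∀ i, f i ⊆ R) ∧ ∀ r ∈ R, ∃ i, r ∈ f i

/-- A decomposition of the reaction set `R`: a partition of `R` into nonempty subsets. -/
def IsDecomposition {ι : Type*} (R : Finset (Rxn S)) (f : ι → Finset (Rxn S)) : Prop :=
  (∀ i, (f i).Nonempty) ∧ (Pairwise fun i j => Disjoint (f i) (f j)) ∧
  (∀ i, f i ⊆ R) ∧ (∀ r ∈ R, ∃ i, r ∈ f i)

/-- Independence: the stoichiometric subspace is the direct sum of those of the subnetworks. -/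
def IsIndependent {ι : Type*} (R : Finset (Rxn S)) (f : ι → Finset (Rxn S)) : Prop :=
  (⨆ i, stoichSubspace (f i)) = stoichSubspace R ∧
  iSupIndep fun i => stoichSubspace (f i)

/-- Incidence independence: the image of the incidence map is the direct sum of the
images of the incidence maps of the subnetworks. -/
def IsIncidenceIndependent {ι : Type*} (R : Finset (Rxn S)) (f : ι → Finset (Rxn S)) : Prop :=
  (⨆ i, incImage (f i)) = incImage R ∧
  iSupIndep fun i => incImage (f i)

/-- A `𝒞`-decomposition: the complex sets of the subnetworks are pairwise disjoint. -/
def CDisjoint {ι : Type*} (f : ι → Finset (Rxn S)) : Prop :=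
  Pairwise fun i j => Disjoint (complexesOf (f i)) (complexesOf (f j))

/-- The set of nonzero complexes of a reaction set. -/
def nonzeroComplexesOf (R : Finset (Rxn S)) : Finset (S → ℝ) := (complexesOf R).erase 0

/-- A `𝒞*`-decomposition: the sets of nonzero complexes are pairwise disjoint. -/
def CstarDisjoint {ι : Type*} (f : ι → Finset (Rxn S)) : Prop :=
  Pairwise fun i j => Disjoint (nonzeroComplexesOf (f i)) (nonzeroComplexesOf (f j))

/-- A coarsening: each block of `f` is contained in exactly one block of `g`. -/
def IsCoarsening {ι κ : Type*} (f : ι → Finset (Rxn S)) (g : κ → Finset (Rxn S)) : Prop :=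
  ∀ i, ∃! j, f i ⊆ g j

/-- Undirected reachability in the graph `(C, R)`. -/
def undirReach (R : Finset (Rxn S)) : (S → ℝ) → (S → ℝ) → Prop :=
  Relation.ReflTransGen fun y z => (y, z) ∈ R ∨ (z, y) ∈ R

/-- Directed reachability in the digraph `(C, R)`. -/
def dirReach (R : Finset (Rxn S)) : (S → ℝ) → (S → ℝ) → Prop :=
  Relation.ReflTransGen fun y z => (y, z) ∈ R

/-- Weak reversibility: every connected component of the directed graph `(C, R)`
is strongly connected. -/
def WeaklyReversible (R : Finset (Rxn S)) : Prop :=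
  ∀ y z, undirReach R y z → dirReach R y z

/-- The set of complex balanced equilibria `Z₊(N, K)` of a kinetics `K` on the
(sub)network with reaction set `R`: positive vectors `x` with `I_a K(x) = 0`. -/
def Zplus (R : Finset (Rxn S)) (K : (S → ℝ) → Rxn S → ℝ) : Set (S → ℝ) :=
  {x | (∀ s, 0 < x s) ∧ ∑ r ∈ R, K x r • (omegaC r.2 - omegaC r.1) = 0}

/-- The reactions lying in the linkage class of the zero complex. -/
def zeroLinkReactions (R : Finset (Rxn S)) : Finset (Rxn S) :=
  R.filter fun r => undirReach R 0 r.1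

/-- The reaction set of the linkage class `c`: all reactions whose complexes lie in `c`. -/
def lcReactions (R : Finset (Rxn S)) (c : (linkGraph R).ConnectedComponent) :
    Finset (Rxn S) :=
  R.filter fun r => ∃ h : r.1 ∈ complexesOf R, (linkGraph R).connectedComponentMk ⟨r.1, h⟩ = c

/-- The network has independent linkage classes (ILC): the linkage class
decomposition is independent. -/
def HasILC (R : Finset (Rxn S)) : Prop := IsIndependent R (lcReactions R)



open Module

theorem walk_sub_mem (R' : Finset (Rxn S)) (v w : {y : S → ℝ // y ∈ complexesOf R'})
    (h : (linkGraph R').Reachable v w) : omegaC v.1 - omegaC w.1 ∈ incImage R' := by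
  obtain ⟨p⟩ := h
  induction p with
  | nil => simpa using (incImage R').zero_mem
  | @cons u x w hadj p ih =>
    have h1 : omegaC u.1 - omegaC x.1 ∈ incImage R' := by
      rcases hadj.2 with h | h
      · have : omegaC x.1 - omegaC u.1 ∈ incImage R' :=
          Submodule.subset_span ⟨((u.1 : S → ℝ), (x.1 : S → ℝ)), h, rfl⟩
        simpa using (incImage R').neg_mem this
      · exact Submodule.subset_span ⟨((x.1 : S → ℝ), (u.1 : S → ℝ)), h, rfl⟩
    have := (incImage R').add_mem h1 ih
    simpa using this

theorem rank_incImage (R' : Finset (Rxn S)) :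
    numComplexes R' = finrank ℝ (incImage R') + numLinkageClasses R' := by
  classical
  set G := linkGraph R' with hGdef
  letI : Fintype {y : S → ℝ // y ∈ complexesOf R'} := FinsetCoe.fintype _
  letI : Fintype G.ConnectedComponent :=
    Fintype.ofSurjective G.connectedComponentMk Quot.mk_surjective
  set root : {y : S → ℝ // y ∈ complexesOf R'} → {y : S → ℝ // y ∈ complexesOf R'} :=
    fun v => Quot.out (G.connectedComponentMk v) with hrootdef
  have hout : ∀ c : G.ConnectedComponent, G.connectedComponentMk (Quot.out c) = c :=
    fun c => Quot.out_eq c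
  have hmk : ∀ v, G.connectedComponentMk (root v) = G.connectedComponentMk v :=
    fun v => hout _
  have hreach : ∀ v, G.Reachable v (root v) :=
    fun v => SimpleGraph.ConnectedComponent.exact (hmk v).symm
  have hrootroot : ∀ v, root (root v) = root v := by
    intro v
    show Quot.out (G.connectedComponentMk (root v)) = root v
    rw [hmk v]
  set b : {v : {y : S → ℝ // y ∈ complexesOf R'} // v ≠ root v} → ((S → ℝ) → ℝ) :=
    fun p => omegaC p.1.1 - omegaC (root p.1).1 with hbdef
  -- linear independence
  have hli : LinearIndependent ℝ b := by
    rw [Fintype.linearIndependent_iff]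
    intro c hc i
    have hfun := congrFun hc i.1.1
    have hterm : ∀ j, (c j • b j) i.1.1 = if i = j then c j else 0 := by
      intro j
      have h2 : (if (i.1.1 : S → ℝ) = (root j.1).1 then (1:ℝ) else 0) = 0 := by
        rw [if_neg]
        intro hx
        have hxe : i.1 = root j.1 := Subtype.ext hx
        exact i.2 (by rw [hxe, hrootroot])
      have h1 : (if (i.1.1 : S → ℝ) = j.1.1 then (1:ℝ) else 0) = if i = j then 1 else 0 := by
        by_cases h : i = j
        · simp [h]
        · rw [if_neg, if_neg h]
          intro hx
          exact h (Subtype.ext (Subtype.ext hx))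
      simp only [hbdef, Pi.smul_apply, Pi.sub_apply, omegaC, smul_eq_mul, h1, h2] at *
      by_cases h : i = j <;> simp [h]
    rw [Finset.sum_apply] at hfun
    simp only [hterm] at hfun
    rw [Finset.sum_ite_eq (Finset.univ) i c] at hfun
    simpa using hfun
  -- span
  have hg : ∀ v, omegaC v.1 - omegaC (root v).1 ∈ Submodule.span ℝ (Set.range b) := by
    intro v
    by_cases hv : v = root v
    · rw [← hv]; simp
    · exact Submodule.subset_span ⟨⟨v, hv⟩, rfl⟩
  have hspan : incImage R' = Submodule.span ℝ (Set.range b) := by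
    apply le_antisymm
    · rw [incImage, Submodule.span_le]
      rintro _ ⟨r, hr, rfl⟩
      have h1 : r.1 ∈ complexesOf R' :=
        Finset.mem_union_left _ (Finset.mem_image_of_mem _ hr)
      have h2 : r.2 ∈ complexesOf R' :=
        Finset.mem_union_right _ (Finset.mem_image_of_mem _ hr)
      set va : {y : S → ℝ // y ∈ complexesOf R'} := ⟨r.1, h1⟩
      set vb : {y : S → ℝ // y ∈ complexesOf R'} := ⟨r.2, h2⟩
      by_cases hrr : r.1 = r.2
      · have : (fun r : Rxn S => omegaC r.2 - omegaC r.1) r = 0 := by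
          simp [hrr]
        rw [this]; exact Submodule.zero_mem _
      · have hadj : G.Adj va vb := by
          refine ⟨fun h => hrr (congrArg Subtype.val h), Or.inl ?_⟩
          show ((r.1 : S → ℝ), (r.2 : S → ℝ)) ∈ R'
          rwa [Prod.mk.eta]
        have hroots : root va = root vb := by
          show Quot.out (G.connectedComponentMk va) = Quot.out (G.connectedComponentMk vb)
          rw [SimpleGraph.ConnectedComponent.sound hadj.reachable]
        have heq : (fun r : Rxn S => omegaC r.2 - omegaC r.1) r =
            (omegaC vb.1 - omegaC (root vb).1) - (omegaC va.1 - omegaC (root va).1) := by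
          rw [← hroots]; show omegaC r.2 - omegaC r.1 = _; abel
        rw [heq]
        exact Submodule.sub_mem _ (hg vb) (hg va)
    · rw [Submodule.span_le]
      rintro _ ⟨i, rfl⟩
      exact walk_sub_mem R' i.1 (root i.1) (hreach i.1)
  have hfr : finrank ℝ (incImage R') = Fintype.card {v : {y : S → ℝ // y ∈ complexesOf R'} // v ≠ root v} := by
    rw [hspan]
    exact finrank_span_eq_card hli
  -- components card
  have hcomp : Fintype.card {v : {y : S → ℝ // y ∈ complexesOf R'} // v = root v}
      = Fintype.card G.ConnectedComponent := by
    refine Fintype.card_congr ⟨fun p => G.connectedComponentMk p.1, fun c => ⟨Quot.out c, ?_⟩, ?_, ?_⟩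
    · show Quot.out c = Quot.out (G.connectedComponentMk (Quot.out c))
      rw [hout c]
    · rintro ⟨v, hv⟩
      exact Subtype.ext hv.symm
    · intro c
      exact hout c
  have hcards := Fintype.card_subtype_compl (fun v : {y : S → ℝ // y ∈ complexesOf R'} => v = root v)
  have hle := Fintype.card_subtype_le (fun v : {y : S → ℝ // y ∈ complexesOf R'} => v = root v)
  have hnum : numComplexes R' = Fintype.card {y : S → ℝ // y ∈ complexesOf R'} :=
    (Fintype.card_coe _).symm
  have hlc : numLinkageClasses R' = Fintype.card G.ConnectedComponent := by
    rw [numLinkageClasses, Nat.card_eq_fintype_card]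
  rw [hnum, hlc, hfr, ← hcomp]
  have : Fintype.card {v : {y : S → ℝ // y ∈ complexesOf R'} // v ≠ root v}
      = Fintype.card {v : {y : S → ℝ // y ∈ complexesOf R'} // ¬ v = root v} := by
    convert rfl
  omega

theorem fd_stoich (R' : Finset (Rxn S)) : FiniteDimensional ℝ (stoichSubspace R') :=
  FiniteDimensional.span_of_finite ℝ (R'.finite_toSet.image _)

theorem fd_inc (R' : Finset (Rxn S)) : FiniteDimensional ℝ (incImage R') :=
  FiniteDimensional.span_of_finite ℝ (R'.finite_toSet.image _)

theorem deficiency_eq_finrank (R' : Finset (Rxn S)) :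
    deficiency R' = (finrank ℝ (incImage R') : ℤ) - (finrank ℝ (stoichSubspace R') : ℤ) := by
  have h := rank_incImage R'
  rw [deficiency, crnRank]
  omega

theorem stoich_iSup {k : ℕ} (R : Finset (Rxn S)) (f : Fin k → Finset (Rxn S))
    (hdec : IsDecomposition R f) : (⨆ i, stoichSubspace (f i)) = stoichSubspace R := by
  have hU : (↑R : Set (Rxn S)) = ⋃ i, ↑(f i) := by
    ext r
    simp only [Set.mem_iUnion, Finset.mem_coe]
    exact ⟨fun h => hdec.2.2.2 r h, fun ⟨i, hi⟩ => hdec.2.2.1 i hi⟩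
  rw [stoichSubspace, hU, Set.image_iUnion, Submodule.span_iUnion]
  rfl

theorem inc_iSup {k : ℕ} (R : Finset (Rxn S)) (f : Fin k → Finset (Rxn S))
    (hdec : IsDecomposition R f) : (⨆ i, incImage (f i)) = incImage R := by
  have hU : (↑R : Set (Rxn S)) = ⋃ i, ↑(f i) := by
    ext r
    simp only [Set.mem_iUnion, Finset.mem_coe]
    exact ⟨fun h => hdec.2.2.2 r h, fun ⟨i, hi⟩ => hdec.2.2.1 i hi⟩
  rw [incImage, hU, Set.image_iUnion, Submodule.span_iUnion]
  rfl

section DimLemmas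
variable {M : Type*} [AddCommGroup M] [Module ℝ M]

theorem finrank_sup_le' (U W : Submodule ℝ M) [FiniteDimensional ℝ U] [FiniteDimensional ℝ W] :
    finrank ℝ ↥(U ⊔ W) ≤ finrank ℝ U + finrank ℝ W := by
  have := Submodule.finrank_sup_add_finrank_inf_eq U W
  omega

theorem disjoint_of_finrank_sup' (U W : Submodule ℝ M) [FiniteDimensional ℝ U]
    [FiniteDimensional ℝ W] (h : finrank ℝ ↥(U ⊔ W) = finrank ℝ U + finrank ℝ W) :
    Disjoint U W := by
  have h2 := Submodule.finrank_sup_add_finrank_inf_eq U W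
  have hz : finrank ℝ ↥(U ⊓ W) = 0 := by omega
  rw [disjoint_iff]
  haveI : FiniteDimensional ℝ ↥(U ⊓ W) :=
    Submodule.finiteDimensional_of_le (inf_le_left : U ⊓ W ≤ U)
  exact Submodule.finrank_eq_zero.mp hz

theorem finrank_sup_of_disjoint' (U W : Submodule ℝ M) [FiniteDimensional ℝ U]
    [FiniteDimensional ℝ W] (h : Disjoint U W) :
    finrank ℝ ↥(U ⊔ W) = finrank ℝ U + finrank ℝ W := by
  have h2 := Submodule.finrank_sup_add_finrank_inf_eq U W
  rw [disjoint_iff.mp h] at h2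
  simpa using h2

variable {ι : Type*} [DecidableEq ι]

theorem fd_finset_sup' (s : Finset ι) (V : ι → Submodule ℝ M)
    (hV : ∀ i, FiniteDimensional ℝ (V i)) : FiniteDimensional ℝ ↥(s.sup V) := by
  classical
  induction s using Finset.induction_on with
  | empty => simpa [Finset.sup_empty] using inferInstanceAs (FiniteDimensional ℝ (⊥ : Submodule ℝ M))
  | @insert a s ha ih =>
    rw [Finset.sup_insert]
    haveI := ih
    haveI := hV a
    infer_instance

theorem finrank_finset_sup_le' (s : Finset ι) (V : ι → Submodule ℝ M)
    (hV : ∀ i, FiniteDimensional ℝ (V i)) :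
    finrank ℝ ↥(s.sup V) ≤ ∑ i ∈ s, finrank ℝ (V i) := by
  classical
  induction s using Finset.induction_on with
  | empty => simp
  | @insert a s ha ih =>
    rw [Finset.sup_insert, Finset.sum_insert ha]
    haveI := fd_finset_sup' s V hV
    haveI := hV a
    exact le_trans (finrank_sup_le' _ _) (by omega)

theorem finrank_finset_sup_of_supIndep' (s : Finset ι) (V : ι → Submodule ℝ M)
    (hV : ∀ i, FiniteDimensional ℝ (V i)) (h : s.SupIndep V) :
    finrank ℝ ↥(s.sup V) = ∑ i ∈ s, finrank ℝ (V i) := by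
  classical
  induction s using Finset.induction_on with
  | empty => simp
  | @insert a s ha ih =>
    rw [Finset.sup_insert, Finset.sum_insert ha]
    haveI := fd_finset_sup' s V hV
    haveI := hV a
    have hd : Disjoint (V a) (s.sup V) := by
      have := Finset.supIndep_iff_disjoint_erase.mp h a (s.mem_insert_self a)
      simpa [Finset.erase_insert ha] using this
    rw [finrank_sup_of_disjoint' _ _ hd, ih (h.subset (s.subset_insert a))]

theorem supIndep_of_finrank_finset_sup' (s : Finset ι) (V : ι → Submodule ℝ M)
    (hV : ∀ i, FiniteDimensional ℝ (V i))
    (h : finrank ℝ ↥(s.sup V) = ∑ i ∈ s, finrank ℝ (V i)) :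
    s.SupIndep V := by
  classical
  rw [Finset.supIndep_iff_disjoint_erase]
  intro i hi
  haveI := hV i
  haveI := fd_finset_sup' (s.erase i) V hV
  have hsup : s.sup V = V i ⊔ (s.erase i).sup V := by
    rw [← Finset.sup_insert, Finset.insert_erase hi]
  have h1 : finrank ℝ ↥(V i ⊔ (s.erase i).sup V)
      ≤ finrank ℝ (V i) + finrank ℝ ↥((s.erase i).sup V) := finrank_sup_le' _ _
  have h2 : finrank ℝ ↥((s.erase i).sup V) ≤ ∑ j ∈ s.erase i, finrank ℝ (V j) :=
    finrank_finset_sup_le' _ _ hV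
  have h3 : ∑ j ∈ s, finrank ℝ (V j) = finrank ℝ (V i) + ∑ j ∈ s.erase i, finrank ℝ (V j) :=
    (Finset.add_sum_erase s _ hi).symm
  apply disjoint_of_finrank_sup'
  rw [hsup] at h
  omega

theorem iSupIndep_iff_finrank {k : ℕ} (V : Fin k → Submodule ℝ M)
    (hV : ∀ i, FiniteDimensional ℝ (V i)) [FiniteDimensional ℝ ↥(⨆ i, V i)] :
    iSupIndep V ↔ finrank ℝ ↥(⨆ i, V i) = ∑ i, finrank ℝ (V i) := by
  classical
  rw [iSupIndep_iff_supIndep_univ, ← Finset.sup_univ_eq_iSup]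
  constructor
  · exact fun h => finrank_finset_sup_of_supIndep' _ _ hV h
  · exact fun h => supIndep_of_finrank_finset_sup' _ _ hV h

theorem finrank_iSup_le {k : ℕ} (V : Fin k → Submodule ℝ M)
    (hV : ∀ i, FiniteDimensional ℝ (V i)) :
    finrank ℝ ↥(⨆ i, V i) ≤ ∑ i, finrank ℝ (V i) := by
  classical
  rw [← Finset.sup_univ_eq_iSup]
  exact finrank_finset_sup_le' _ _ hV

end DimLemmas

/-- if all subnetworks of an independent or incidence independent
decomposition have deficiency zero, then δ = 0 iff the decomposition is bi-independent. -/
theorem stmt_6 (C : Finset (S → ℝ)) (R : Finset (Rxn S)) {k : ℕ}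
    (f : Fin k → Finset (Rxn S)) (hcrn : IsCRN C R) (hdec : IsDecomposition R f)
    (hii : IsIndependent R f ∨ IsIncidenceIndependent R f)
    (hzero : ∀ i, deficiency (f i) = 0) :
    deficiency R = 0 ↔ (IsIndependent R f ∧ IsIncidenceIndependent R f) := by
  classical
  have hfd_s : ∀ i : Fin k, FiniteDimensional ℝ (stoichSubspace (f i)) := fun i => fd_stoich (f i)
  have hfd_b : ∀ i : Fin k, FiniteDimensional ℝ (incImage (f i)) := fun i => fd_inc (f i)
  haveI : FiniteDimensional ℝ (stoichSubspace R) := fd_stoich R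
  haveI : FiniteDimensional ℝ (incImage R) := fd_inc R
  have hsS := stoich_iSup R f hdec
  have hsI := inc_iSup R f hdec
  haveI : FiniteDimensional ℝ ↥(⨆ i, stoichSubspace (f i)) := by rw [hsS]; exact fd_stoich R
  haveI : FiniteDimensional ℝ ↥(⨆ i, incImage (f i)) := by rw [hsI]; exact fd_inc R
  have hind_iff : IsIndependent R f ↔
      finrank ℝ (stoichSubspace R) = ∑ i, finrank ℝ (stoichSubspace (f i)) := by
    constructor
    · rintro ⟨_, h2⟩
      have := (iSupIndep_iff_finrank _ hfd_s).mp h2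
      rwa [hsS] at this
    · intro h
      exact ⟨hsS, (iSupIndep_iff_finrank _ hfd_s).mpr (by rwa [hsS])⟩
  have hinc_iff : IsIncidenceIndependent R f ↔
      finrank ℝ (incImage R) = ∑ i, finrank ℝ (incImage (f i)) := by
    constructor
    · rintro ⟨_, h2⟩
      have := (iSupIndep_iff_finrank _ hfd_b).mp h2
      rwa [hsI] at this
    · intro h
      exact ⟨hsI, (iSupIndep_iff_finrank _ hfd_b).mpr (by rwa [hsI])⟩
  have hsle : finrank ℝ (stoichSubspace R) ≤ ∑ i, finrank ℝ (stoichSubspace (f i)) := by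
    rw [← hsS]; exact finrank_iSup_le _ hfd_s
  have hble : finrank ℝ (incImage R) ≤ ∑ i, finrank ℝ (incImage (f i)) := by
    rw [← hsI]; exact finrank_iSup_le _ hfd_b
  have hbs : ∀ i, finrank ℝ (incImage (f i)) = finrank ℝ (stoichSubspace (f i)) := by
    intro i
    have h0 := hzero i
    rw [deficiency_eq_finrank] at h0
    omega
  have hsum : ∑ i, finrank ℝ (incImage (f i)) = ∑ i, finrank ℝ (stoichSubspace (f i)) :=
    Finset.sum_congr rfl fun i _ => hbs i
  rw [deficiency_eq_finrank R, hind_iff, hinc_iff]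
  rcases hii with h | h
  · have hs := hind_iff.mp h
    rw [hind_iff] at h
    constructor
    · intro hδ
      exact ⟨h, by omega⟩
    · rintro ⟨_, h2⟩
      omega
  · have hb := hinc_iff.mp h
    rw [hinc_iff] at h
    constructor
    · intro hδ
      exact ⟨by omega, h⟩
    · rintro ⟨h2, _⟩
      omega

end
end

section
/- A chemical reaction network has independent linkage classes if and only if every C-decomposition of the network is independent. -/
open scoped Classical

noncomputable section

variable {S : Type*} [Fintype S]

/-! ### Auxiliary lemmas -/

lemma fst_mem_complexesOf {F : Finset (Rxn S)} {r : Rxn S} (h : r ∈ F) :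
    r.1 ∈ complexesOf F :=
  Finset.mem_union_left _ (Finset.mem_image_of_mem Prod.fst h)

lemma snd_mem_complexesOf {F : Finset (Rxn S)} {r : Rxn S} (h : r ∈ F) :
    r.2 ∈ complexesOf F :=
  Finset.mem_union_right _ (Finset.mem_image_of_mem Prod.snd h)

lemma mem_complexesOf_iff {F : Finset (Rxn S)} {y : S → ℝ} :
    y ∈ complexesOf F ↔ ∃ r ∈ F, r.1 = y ∨ r.2 = y := by
  simp only [complexesOf, Finset.mem_union, Finset.mem_image]
  constructor
  · rintro (⟨r, hr, h⟩ | ⟨r, hr, h⟩)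
    · exact ⟨r, hr, Or.inl h⟩
    · exact ⟨r, hr, Or.inr h⟩
  · rintro ⟨r, hr, h | h⟩
    · exact Or.inl ⟨r, hr, h⟩
    · exact Or.inr ⟨r, hr, h⟩

/-- The sup of stoichiometric subspaces of a covering equals the stoichiometric
subspace of the whole. -/
lemma stoich_iSup_s11 {ι : Type*} (T : Finset (Rxn S)) (g : ι → Finset (Rxn S))
    (h1 : ∀ i, g i ⊆ T) (h2 : ∀ r ∈ T, ∃ i, r ∈ g i) :
    (⨆ i, stoichSubspace (g i)) = stoichSubspace T := by
  apply le_antisymm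
  · refine iSup_le fun i => Submodule.span_mono (Set.image_mono ?_)
    exact_mod_cast h1 i
  · rw [stoichSubspace, Submodule.span_le]
    rintro x ⟨r, hr, rfl⟩
    obtain ⟨i, hi⟩ := h2 r (by exact_mod_cast hr)
    exact (le_iSup (fun i => stoichSubspace (g i)) i)
      (Submodule.subset_span ⟨r, by exact_mod_cast hi, rfl⟩)

/-- For an independent family of submodules, bounded sups over disjoint index
sets are disjoint. -/
lemma indep_disjoint_biSup_biSup {κ : Type*} {M : Type*} [AddCommGroup M] [Module ℝ M]
    {a : κ → Submodule ℝ M} (h : iSupIndep a) {s t : Set κ} (hst : Disjoint s t) :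
    Disjoint (⨆ c ∈ s, a c) (⨆ c ∈ t, a c) := by
  classical
  rw [Submodule.disjoint_def]
  intro x hxs hxt
  obtain ⟨fs, hfs⟩ := (Submodule.mem_biSup_iff_exists_dfinsupp (· ∈ s) a x).mp hxs
  obtain ⟨ft, hft⟩ := (Submodule.mem_biSup_iff_exists_dfinsupp (· ∈ t) a x).mp hxt
  have hinj := h.dfinsupp_lsum_injective
  have heq : fs.filter (· ∈ s) = ft.filter (· ∈ t) := hinj (hfs.trans hft.symm)
  have hzero : fs.filter (· ∈ s) = 0 := by
    ext c
    by_cases hcs : c ∈ s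
    · have hct : c ∉ t := Set.disjoint_left.mp hst hcs
      rw [heq]
      simp [DFinsupp.filter_apply, hct]
    · simp [DFinsupp.filter_apply, hcs]
  rw [hzero, map_zero] at hfs
  exact hfs.symm

/-- Along an undirected reachability path, membership of complexes in a block of a
C-disjoint covering is constant. -/
lemma complex_block_constant {ι : Type*} {R : Finset (Rxn S)} {f : ι → Finset (Rxn S)}
    (hC : CDisjoint f) (hcov : ∀ r ∈ R, ∃ i, r ∈ f i)
    {y z : S → ℝ} (h : undirReach R y z) {j : ι} (hy : y ∈ complexesOf (f j)) :
    z ∈ complexesOf (f j) := by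
  induction h with
  | refl => exact hy
  | tail h1 h2 ih =>
    rename_i b z'
    have hb : b ∈ complexesOf (f j) := ih
    rcases h2 with hr | hr
    · obtain ⟨j', hj'⟩ := hcov _ hr
      have hbj' : b ∈ complexesOf (f j') := fst_mem_complexesOf hj'
      have hzj' : z' ∈ complexesOf (f j') := snd_mem_complexesOf hj'
      have hjj : j = j' := by
        by_contra hne
        exact Finset.disjoint_left.mp (hC hne) hb hbj'
      rw [hjj]; exact hzj'
    · obtain ⟨j', hj'⟩ := hcov _ hr
      have hbj' : b ∈ complexesOf (f j') := snd_mem_complexesOf hj'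
      have hzj' : z' ∈ complexesOf (f j') := fst_mem_complexesOf hj'
      have hjj : j = j' := by
        by_contra hne
        exact Finset.disjoint_left.mp (hC hne) hb hbj'
      rw [hjj]; exact hzj'

/-- In a C-disjoint covering, reactions whose sources are mutually reachable lie in
the same block. -/
lemma same_block {ι : Type*} {R : Finset (Rxn S)} {f : ι → Finset (Rxn S)}
    (hC : CDisjoint f) (hcov : ∀ r ∈ R, ∃ i, r ∈ f i)
    {r r' : Rxn S} (hr' : r' ∈ R) {j : ι} (hrj : r ∈ f j)
    (hreach : undirReach R r.1 r'.1) : r' ∈ f j := by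
  have h1 : r'.1 ∈ complexesOf (f j) :=
    complex_block_constant hC hcov hreach (fst_mem_complexesOf hrj)
  obtain ⟨j', hj'⟩ := hcov r' hr'
  have hjj : j = j' := by
    by_contra hne
    exact Finset.disjoint_left.mp (hC hne) h1 (fst_mem_complexesOf hj')
  rw [hjj]; exact hj'

lemma undirReach_of_reachable {R : Finset (Rxn S)} {u v : {y : S → ℝ // y ∈ complexesOf R}}
    (h : (linkGraph R).Reachable u v) : undirReach R u.1 v.1 := by
  rw [SimpleGraph.reachable_iff_reflTransGen] at h
  induction h with
  | refl => exact Relation.ReflTransGen.refl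
  | tail _ h2 ih => exact ih.tail h2.2

lemma mk_fst_eq_mk_snd {R : Finset (Rxn S)} (hloop : ∀ r ∈ R, r.1 ≠ r.2)
    {r : Rxn S} (hr : r ∈ R) :
    (linkGraph R).connectedComponentMk ⟨r.1, fst_mem_complexesOf hr⟩ =
      (linkGraph R).connectedComponentMk ⟨r.2, snd_mem_complexesOf hr⟩ := by
  apply SimpleGraph.ConnectedComponent.sound
  apply SimpleGraph.Adj.reachable
  refine ⟨fun h => hloop r hr (congrArg Subtype.val h), Or.inl ?_⟩
  rw [Prod.mk.eta]; exact hr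

lemma mem_lcReactions_mk {R : Finset (Rxn S)} {r : Rxn S} (hr : r ∈ R) :
    r ∈ lcReactions R ((linkGraph R).connectedComponentMk ⟨r.1, fst_mem_complexesOf hr⟩) :=
  Finset.mem_filter.mpr ⟨hr, ⟨fst_mem_complexesOf hr, rfl⟩⟩

lemma lc_nonempty {R : Finset (Rxn S)} (hloop : ∀ r ∈ R, r.1 ≠ r.2)
    (c : (linkGraph R).ConnectedComponent) : (lcReactions R c).Nonempty := by
  obtain ⟨v, hv⟩ := Quot.exists_rep c
  have hvmem := v.2
  obtain ⟨r, hr, hy⟩ := mem_complexesOf_iff.mp hvmem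
  refine ⟨r, Finset.mem_filter.mpr ⟨hr, ⟨fst_mem_complexesOf hr, ?_⟩⟩⟩
  rcases hy with hy | hy
  · rw [← hv]
    congr 1
    exact Subtype.ext hy
  · rw [mk_fst_eq_mk_snd hloop hr, ← hv]
    congr 1
    exact Subtype.ext hy

lemma lc_pairwise_disjoint {R : Finset (Rxn S)} :
    Pairwise fun c c' => Disjoint (lcReactions R c) (lcReactions R c') := by
  intro c c' hne
  rw [Finset.disjoint_left]
  intro r h1 h2
  obtain ⟨_, ⟨p1, e1⟩⟩ := Finset.mem_filter.mp h1
  obtain ⟨_, ⟨p2, e2⟩⟩ := Finset.mem_filter.mp h2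
  exact hne (e1.symm.trans e2)

lemma comp_of_mem_lc_complexes {R : Finset (Rxn S)} (hloop : ∀ r ∈ R, r.1 ≠ r.2)
    {c : (linkGraph R).ConnectedComponent} {y : S → ℝ}
    (hy : y ∈ complexesOf (lcReactions R c)) :
    ∃ h : y ∈ complexesOf R, (linkGraph R).connectedComponentMk ⟨y, h⟩ = c := by
  obtain ⟨r, hrlc, hr1⟩ := mem_complexesOf_iff.mp hy
  obtain ⟨hrR, ⟨p1, e1⟩⟩ := Finset.mem_filter.mp hrlc
  rcases hr1 with h | h
  · refine ⟨h ▸ fst_mem_complexesOf hrR, ?_⟩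
    rw [← e1]
    congr 1
    exact Subtype.ext h.symm
  · refine ⟨h ▸ snd_mem_complexesOf hrR, ?_⟩
    rw [← e1, mk_fst_eq_mk_snd hloop hrR]
    congr 1
    exact Subtype.ext h.symm

lemma lc_CDisjoint {R : Finset (Rxn S)} (hloop : ∀ r ∈ R, r.1 ≠ r.2) :
    CDisjoint (lcReactions R) := by
  intro c c' hne
  rw [Finset.disjoint_left]
  intro y h1 h2
  obtain ⟨q1, e1⟩ := comp_of_mem_lc_complexes hloop h1
  obtain ⟨q2, e2⟩ := comp_of_mem_lc_complexes hloop h2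
  exact hne (e1.symm.trans e2)

lemma lc_subset {R : Finset (Rxn S)} (c : (linkGraph R).ConnectedComponent) :
    lcReactions R c ⊆ R := Finset.filter_subset _ _

/-- a network has independent linkage classes iff every
C-decomposition of the network is independent. -/
theorem stmt_11 (C : Finset (S → ℝ)) (R : Finset (Rxn S)) (hcrn : IsCRN C R) :
    HasILC R ↔
      ∀ (k : ℕ) (f : Fin k → Finset (Rxn S)),
        IsDecomposition R f → CDisjoint f → IsIndependent R f := by
  have hloop : ∀ r ∈ R, r.1 ≠ r.2 := hcrn.2.2.2.2.1
  have hlccov : ∀ r ∈ R, ∃ c, r ∈ lcReactions R c :=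
    fun r hr => ⟨_, mem_lcReactions_mk hr⟩
  constructor
  · -- ILC implies every C-decomposition is independent
    intro hILC k f hdec hCd
    obtain ⟨hne, hdisj, hsub, hcov⟩ := hdec
    have hlcindep : iSupIndep fun c => stoichSubspace (lcReactions R c) := hILC.2
    -- choose for each linkage class the block of f containing it
    have hchoice : ∀ c : (linkGraph R).ConnectedComponent,
        ∃ j, lcReactions R c ⊆ f j := by
      intro c
      obtain ⟨r₀, hr₀⟩ := lc_nonempty hloop c
      obtain ⟨hr₀R, ⟨p0, e0⟩⟩ := Finset.mem_filter.mp hr₀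
      obtain ⟨j, hj⟩ := hcov r₀ hr₀R
      refine ⟨j, fun r hr => ?_⟩
      obtain ⟨hrR, ⟨p1, e1⟩⟩ := Finset.mem_filter.mp hr
      have hreach : undirReach R r₀.1 r.1 := by
        exact undirReach_of_reachable (u := ⟨r₀.1, p0⟩) (v := ⟨r.1, p1⟩)
          ((SimpleGraph.ConnectedComponent.eq).mp (e0.trans e1.symm))
      exact same_block hCd hcov hrR hj hreach
    choose p hp using hchoice
    have key : ∀ j, stoichSubspace (f j) =
        ⨆ c ∈ {c | p c = j}, stoichSubspace (lcReactions R c) := by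
      intro j
      rw [iSup_subtype']
      symm
      apply stoich_iSup_s11 (f j)
        (fun c : {c // c ∈ {c | p c = j}} => lcReactions R c.1)
      · intro i
        have hi : p i.1 = j := i.2
        have := hp i.1
        rw [hi] at this
        exact this
      · intro r hr
        have hrR : r ∈ R := hsub j hr
        set c₀ := (linkGraph R).connectedComponentMk ⟨r.1, fst_mem_complexesOf hrR⟩ with hc₀
        have hrc₀ : r ∈ lcReactions R c₀ := mem_lcReactions_mk hrR
        have hpc₀ : p c₀ = j := by
          by_contra hnej
          exact Finset.disjoint_left.mp (hdisj hnej) (hp c₀ hrc₀) hr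
        exact ⟨⟨c₀, hpc₀⟩, hrc₀⟩
    constructor
    · exact stoich_iSup_s11 R f hsub hcov
    · intro j
      have hdisj2 : Disjoint (⨆ c ∈ {c | p c = j}, stoichSubspace (lcReactions R c))
          (⨆ c ∈ {c | p c ≠ j}, stoichSubspace (lcReactions R c)) :=
        indep_disjoint_biSup_biSup hlcindep
          (Set.disjoint_left.mpr fun c hc hc' => hc' hc)
      refine hdisj2.mono (key j).le ?_
      refine iSup₂_le fun j' hj' => ?_
      refine le_trans (key j').le ?_
      refine iSup₂_le fun c hc => ?_
      have hc' : p c = j' := hc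
      exact le_iSup₂_of_le c (show p c ≠ j by rw [hc']; exact hj') le_rfl
  · -- every C-decomposition independent implies ILC
    intro hall
    haveI : Finite ((linkGraph R).ConnectedComponent) := Quot.finite _
    haveI : Fintype ((linkGraph R).ConnectedComponent) := Fintype.ofFinite _
    set k := Fintype.card ((linkGraph R).ConnectedComponent)
    set e := (Fintype.equivFin ((linkGraph R).ConnectedComponent)).symm with he
    have hdec : IsDecomposition R (fun j => lcReactions R (e j)) := by
      refine ⟨fun j => lc_nonempty hloop _, ?_, fun j => lc_subset _, ?_⟩
      · intro i j hij
        exact lc_pairwise_disjoint (e.injective.ne hij)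
      · intro r hr
        obtain ⟨c, hc⟩ := hlccov r hr
        refine ⟨e.symm c, ?_⟩
        show r ∈ lcReactions R (e (e.symm c))
        rw [Equiv.apply_symm_apply]
        exact hc
    have hCd : CDisjoint (fun j => lcReactions R (e j)) := by
      intro i j hij
      exact lc_CDisjoint hloop (e.injective.ne hij)
    obtain ⟨hsup, hind⟩ := hall k _ hdec hCd
    constructor
    · exact stoich_iSup_s11 R (lcReactions R) lc_subset hlccov
    · exact iSupIndep.comp'
        (t := fun c => stoichSubspace (lcReactions R c)) (f := e) hind e.surjective

end
end

section
/- (Structure Theorem for C*-decompositions) Let N = N_1 ∪ N_2 ∪ ... ∪ N_k be a C*-decomposition of a chemical reaction network N whose complex set contains the zero complex, let L_0 be the linkage class of N containing the zero complex, and for each i let L_{0,i} be the linkage class of N_i containing the zero complex (taken to be empty if N_i does not contain the zero complex). Then: (i) the nonempty L_{0,i} form a C*-decomposition of the subnetwork L_0; and (ii) the nonempty subnetworks N_i \ L_{0,i} form a C-decomposition of N \ L_0. -/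
open scoped Classical

noncomputable section

variable {S : Type*} [Fintype S]

lemma mem_complexesOf_fst {R : Finset (Rxn S)} {r : Rxn S} (h : r ∈ R) :
    r.1 ∈ complexesOf R :=
  Finset.mem_union_left _ (Finset.mem_image_of_mem _ h)

lemma mem_complexesOf_snd {R : Finset (Rxn S)} {r : Rxn S} (h : r ∈ R) :
    r.2 ∈ complexesOf R :=
  Finset.mem_union_right _ (Finset.mem_image_of_mem _ h)

lemma complexesOf_mono {A B : Finset (Rxn S)} (h : A ⊆ B) :
    complexesOf A ⊆ complexesOf B :=
  Finset.union_subset_union (Finset.image_subset_image h) (Finset.image_subset_image h)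

lemma undirReach_mono {A B : Finset (Rxn S)} (h : A ⊆ B) {x y : S → ℝ}
    (hr : undirReach A x y) : undirReach B x y :=
  Relation.ReflTransGen.mono (p := fun y z => (y, z) ∈ B ∨ (z, y) ∈ B)
    (fun a b (hab : (a, b) ∈ A ∨ (b, a) ∈ A) => hab.imp (h ·) (h ·)) x y hr

/-- Key lemma: in a C*-decomposition, any complex reachable from 0 in the whole
network is reachable from 0 within any subnetwork containing it. -/
lemma key_reach {k : ℕ} {R : Finset (Rxn S)} {f : Fin k → Finset (Rxn S)}
    (hcov : ∀ r ∈ R, ∃ i, r ∈ f i) (hstar : CstarDisjoint f) :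
    ∀ y, undirReach R 0 y → ∀ i, y ∈ complexesOf (f i) → undirReach (f i) 0 y := by
  intro y h
  induction h with
  | refl => intro i _; exact Relation.ReflTransGen.refl
  | @tail b c hab hbc ih =>
    intro i hci
    by_cases hc0 : c = 0
    · subst hc0; exact Relation.ReflTransGen.refl
    · rcases hbc with h1 | h1
      · obtain ⟨j, hj⟩ := hcov _ h1
        have hcj : c ∈ complexesOf (f j) := mem_complexesOf_snd hj
        have hbj : b ∈ complexesOf (f j) := mem_complexesOf_fst hj
        have hij : i = j := by
          by_contra hne'
          exact Finset.disjoint_left.mp (hstar hne')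
            (Finset.mem_erase.mpr ⟨hc0, hci⟩) (Finset.mem_erase.mpr ⟨hc0, hcj⟩)
        subst hij
        exact (ih i hbj).tail (Or.inl hj)
      · obtain ⟨j, hj⟩ := hcov _ h1
        have hcj : c ∈ complexesOf (f j) := mem_complexesOf_fst hj
        have hbj : b ∈ complexesOf (f j) := mem_complexesOf_snd hj
        have hij : i = j := by
          by_contra hne'
          exact Finset.disjoint_left.mp (hstar hne')
            (Finset.mem_erase.mpr ⟨hc0, hci⟩) (Finset.mem_erase.mpr ⟨hc0, hcj⟩)
        subst hij
        exact (ih i hbj).tail (Or.inr hj)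

/-- Structure Theorem for C*-decompositions: (i) the nonempty linkage
classes L_{0,i} of the zero complex in the subnetworks form a C*-decomposition of L_0;
(ii) the nonempty subnetworks N_i \ L_{0,i} form a C-decomposition of N \ L_0. -/
theorem stmt_15 (C : Finset (S → ℝ)) (R : Finset (Rxn S)) {k : ℕ}
    (f : Fin k → Finset (Rxn S)) (hcrn : IsCRN C R) (h0 : (0 : S → ℝ) ∈ C)
    (hdec : IsDecomposition R f) (hstar : CstarDisjoint f) :
    (IsDecomposition (zeroLinkReactions R)
        (fun i : {i : Fin k // (zeroLinkReactions (f i)).Nonempty} =>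
          zeroLinkReactions (f i.1)) ∧
      CstarDisjoint
        (fun i : {i : Fin k // (zeroLinkReactions (f i)).Nonempty} =>
          zeroLinkReactions (f i.1))) ∧
    (IsDecomposition (R \ zeroLinkReactions R)
        (fun i : {i : Fin k // (f i \ zeroLinkReactions (f i)).Nonempty} =>
          f i.1 \ zeroLinkReactions (f i.1)) ∧
      CDisjoint
        (fun i : {i : Fin k // (f i \ zeroLinkReactions (f i)).Nonempty} =>
          f i.1 \ zeroLinkReactions (f i.1))) := by
  obtain ⟨hne, hpair, hsub, hcov⟩ := hdec
  have keyR : ∀ i r, r ∈ f i → undirReach R 0 r.1 → undirReach (f i) 0 r.1 :=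
    fun i r hr h => key_reach hcov hstar _ h i (mem_complexesOf_fst hr)
  have zsub : ∀ i, zeroLinkReactions (f i) ⊆ zeroLinkReactions R := by
    intro i r hr
    rw [zeroLinkReactions, Finset.mem_filter] at hr ⊢
    exact ⟨hsub i hr.1, undirReach_mono (hsub i) hr.2⟩
  have h0not : ∀ i, (0 : S → ℝ) ∉ complexesOf (f i \ zeroLinkReactions (f i)) := by
    intro i h0
    rcases Finset.mem_union.mp h0 with h | h
    · obtain ⟨r, hr, hr0⟩ := Finset.mem_image.mp h
      obtain ⟨hr1, hr2⟩ := Finset.mem_sdiff.mp hr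
      exact hr2 (Finset.mem_filter.mpr ⟨hr1, hr0 ▸ Relation.ReflTransGen.refl⟩)
    · obtain ⟨r, hr, hr0⟩ := Finset.mem_image.mp h
      obtain ⟨hr1, hr2⟩ := Finset.mem_sdiff.mp hr
      refine hr2 (Finset.mem_filter.mpr ⟨hr1, Relation.ReflTransGen.single (Or.inr ?_)⟩)
      have : (r.1, (0 : S → ℝ)) = r := by
        rw [← hr0]
      exact this ▸ hr1
  refine ⟨⟨⟨fun i => i.2, ?_, fun i => zsub i.1, ?_⟩, ?_⟩,
    ⟨⟨fun i => i.2, ?_, ?_, ?_⟩, ?_⟩⟩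
  · -- pairwise disjoint (i)
    intro i j hij
    exact (hpair (fun h => hij (Subtype.ext h))).mono
      (Finset.filter_subset _ _) (Finset.filter_subset _ _)
  · -- cover (i)
    intro r hr
    obtain ⟨hrR, hreach⟩ := Finset.mem_filter.mp hr
    obtain ⟨j, hj⟩ := hcov r hrR
    have hz : r ∈ zeroLinkReactions (f j) :=
      Finset.mem_filter.mpr ⟨hj, keyR j r hj hreach⟩
    exact ⟨⟨j, ⟨r, hz⟩⟩, hz⟩
  · -- CstarDisjoint (i)
    intro i j hij
    exact (hstar (fun h => hij (Subtype.ext h))).mono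
      (Finset.erase_subset_erase _ (complexesOf_mono (Finset.filter_subset _ _)))
      (Finset.erase_subset_erase _ (complexesOf_mono (Finset.filter_subset _ _)))
  · -- pairwise disjoint (ii)
    intro i j hij
    exact (hpair (fun h => hij (Subtype.ext h))).mono
      Finset.sdiff_subset Finset.sdiff_subset
  · -- subset (ii)
    intro i r hr
    obtain ⟨hr1, hr2⟩ := Finset.mem_sdiff.mp hr
    refine Finset.mem_sdiff.mpr ⟨hsub i.1 hr1, fun hz => hr2 ?_⟩
    exact Finset.mem_filter.mpr ⟨hr1, keyR i.1 r hr1 (Finset.mem_filter.mp hz).2⟩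
  · -- cover (ii)
    intro r hr
    obtain ⟨hrR, hrn⟩ := Finset.mem_sdiff.mp hr
    obtain ⟨j, hj⟩ := hcov r hrR
    have hnz : r ∉ zeroLinkReactions (f j) := fun hz => hrn (zsub j hz)
    have hmem : r ∈ f j \ zeroLinkReactions (f j) := Finset.mem_sdiff.mpr ⟨hj, hnz⟩
    exact ⟨⟨j, ⟨r, hmem⟩⟩, hmem⟩
  · -- CDisjoint (ii)
    intro i j hij
    have hsubnz : ∀ i' : Fin k,
        complexesOf (f i' \ zeroLinkReactions (f i')) ⊆ nonzeroComplexesOf (f i') := by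
      intro i' y hy
      refine Finset.mem_erase.mpr ⟨fun h => h0not i' (h ▸ hy), complexesOf_mono Finset.sdiff_subset hy⟩
    exact (hstar (fun h => hij (Subtype.ext h))).mono (hsubnz i.1) (hsubnz j.1)

end
end
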